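/- Fix integers k ≥ 1, d ≥ 1 and ℓ with 1 ≤ ℓ ≤ min(d,k). Define g_ℓ : (0,1] → ℝ by g_ℓ(x) = e^{-2kx}·(ekx/ℓ)^ℓ·(ln(e/x^{ℓ/d}))^{d/2}. Then g_ℓ attains its maximum over (0,1] at some point x* ∈ [ℓ/(4k), min(ℓ/(2k),1)], and sup_{x∈(0,1]} g_ℓ(x) ≤ e^{-ℓ/2}·(e/2)^ℓ·(ln(e·(4k/ℓ)^{ℓ/d}))^{d/2} when ℓ/(4k) ≤ 1. -/

import Mathlib

/-- `g_ℓ(x) = e^{-2kx} (ekx/ℓ)^ℓ (ln(e/x^{ℓ/d}))^{d/2}`. -/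
noncomputable def gl (k d ℓ : ℕ) (x : ℝ) : ℝ :=
  Real.exp (-2 * k * x) * (Real.exp 1 * k * x / ℓ) ^ ℓ *
    (Real.log (Real.exp 1 / x ^ ((ℓ : ℝ) / (d : ℝ)))) ^ ((d : ℝ) / 2)

noncomputable def philk (k d ℓ : ℕ) (x : ℝ) : ℝ :=
  -2 * k * x + ℓ * Real.log (Real.exp 1 * k * x / ℓ)
    + ((d : ℝ) / 2) * Real.log (1 - ((ℓ : ℝ) / d) * Real.log x)

lemma L_ge_one (d ℓ : ℕ) {x : ℝ} (hx : 0 < x) (hx1 : x ≤ 1) :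
    (1 : ℝ) ≤ 1 - ((ℓ : ℝ) / d) * Real.log x := by
  have h1 : Real.log x ≤ 0 := Real.log_nonpos hx.le hx1
  have h2 : (0:ℝ) ≤ (ℓ:ℝ)/d := by positivity
  nlinarith

lemma log_term_eq (d ℓ : ℕ) {x : ℝ} (hx : 0 < x) :
    Real.log (Real.exp 1 / x ^ ((ℓ : ℝ) / (d : ℝ))) = 1 - ((ℓ : ℝ) / d) * Real.log x := by
  rw [Real.log_div (Real.exp_ne_zero 1) (by positivity), Real.log_exp, Real.log_rpow hx]

lemma gl_eq (k d ℓ : ℕ) (hk : 1 ≤ k) (hℓ1 : 1 ≤ ℓ) {x : ℝ} (hx : 0 < x) (hx1 : x ≤ 1) :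
    gl k d ℓ x = Real.exp (philk k d ℓ x) := by
  have hk0 : (0:ℝ) < k := by exact_mod_cast hk
  have hℓ0 : (0:ℝ) < ℓ := by exact_mod_cast hℓ1
  have hb : (0:ℝ) < Real.exp 1 * k * x / ℓ := by positivity
  have hL : (0:ℝ) < 1 - ((ℓ : ℝ) / d) * Real.log x :=
    lt_of_lt_of_le one_pos (L_ge_one d ℓ hx hx1)
  rw [gl, philk, log_term_eq d ℓ hx, Real.exp_add, Real.exp_add]
  congr 1
  · congr 1
    rw [Real.exp_nat_mul, Real.exp_log hb]
  · rw [Real.rpow_def_of_pos hL, mul_comm]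

lemma philk_hasDeriv (k d ℓ : ℕ) (hk : 1 ≤ k) (hd : 1 ≤ d) (hℓ1 : 1 ≤ ℓ) {x : ℝ}
    (hx : 0 < x) (hx1 : x ≤ 1) :
    HasDerivAt (philk k d ℓ)
      ((((ℓ:ℝ) - 2*k*x) * (1 - ((ℓ : ℝ) / d) * Real.log x) - ℓ/2) /
        (x * (1 - ((ℓ : ℝ) / d) * Real.log x))) x := by
  have hk0 : (0:ℝ) < k := by exact_mod_cast hk
  have hd0 : (0:ℝ) < d := by exact_mod_cast hd
  have hℓ0 : (0:ℝ) < ℓ := by exact_mod_cast hℓ1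
  have hb : (0:ℝ) < Real.exp 1 * k * x / ℓ := by positivity
  have hL : (0:ℝ) < 1 - ((ℓ : ℝ) / d) * Real.log x :=
    lt_of_lt_of_le one_pos (L_ge_one d ℓ hx hx1)
  have h1 : HasDerivAt (fun x : ℝ => -2 * (k:ℝ) * x) (-2 * k) x := by
    simpa using (hasDerivAt_id x).const_mul (-2 * (k:ℝ))
  have h2a : HasDerivAt (fun x : ℝ => Real.exp 1 * k * x / ℓ) (Real.exp 1 * k / ℓ) x := by
    simpa using ((hasDerivAt_id x).const_mul (Real.exp 1 * (k:ℝ))).div_const (ℓ:ℝ)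
  have h2 : HasDerivAt (fun x : ℝ => (ℓ:ℝ) * Real.log (Real.exp 1 * k * x / ℓ))
      ((ℓ:ℝ) * ((Real.exp 1 * k / ℓ) / (Real.exp 1 * k * x / ℓ))) x :=
    (h2a.log hb.ne').const_mul _
  have h3a : HasDerivAt (fun x : ℝ => 1 - ((ℓ:ℝ)/d) * Real.log x) (-(((ℓ:ℝ)/d) * x⁻¹)) x :=
    ((Real.hasDerivAt_log hx.ne').const_mul ((ℓ:ℝ)/d)).const_sub 1
  have h3 : HasDerivAt (fun x : ℝ => ((d:ℝ)/2) * Real.log (1 - ((ℓ:ℝ)/d) * Real.log x))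
      (((d:ℝ)/2) * ((-(((ℓ:ℝ)/d) * x⁻¹)) / (1 - ((ℓ:ℝ)/d) * Real.log x))) x :=
    (h3a.log hL.ne').const_mul _
  have h := (h1.add h2).add h3
  convert h using 1
  · rfl
  · rfl
  · rfl
  have hex : Real.exp 1 ≠ 0 := Real.exp_ne_zero 1
  have hL2 : (d:ℝ) - ℓ * Real.log x ≠ 0 := by
    have : (0:ℝ) < (d:ℝ) * (1 - ((ℓ : ℝ) / d) * Real.log x) := by positivity
    intro h
    rw [mul_sub, mul_one] at this
    have he : (d:ℝ) * ((ℓ:ℝ)/d * Real.log x) = ℓ * Real.log x := by field_simp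
    rw [he] at this
    linarith
  field_simp
  ring

lemma philk_cont (k d ℓ : ℕ) (hk : 1 ≤ k) (hℓ1 : 1 ≤ ℓ) :
    ContinuousOn (philk k d ℓ) (Set.Ioc 0 1) := by
  have hk0 : (0:ℝ) < k := by exact_mod_cast hk
  have hℓ0 : (0:ℝ) < ℓ := by exact_mod_cast hℓ1
  apply ContinuousOn.add
  apply ContinuousOn.add
  · exact (continuous_const.mul continuous_id).continuousOn
  · refine continuousOn_const.mul (ContinuousOn.log ?_ ?_)
    · exact ((continuous_const.mul continuous_id).div_const _).continuousOn
    · intro x hx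
      have hx0 : (0:ℝ) < x := hx.1
      positivity
  · refine continuousOn_const.mul (ContinuousOn.log ?_ ?_)
    · refine continuousOn_const.sub (continuousOn_const.mul ?_)
      exact Real.continuousOn_log.mono (fun x hx => ne_of_gt hx.1)
    · intro x hx
      exact (lt_of_lt_of_le one_pos (L_ge_one d ℓ hx.1 hx.2)).ne'

set_option maxHeartbeats 1000000 in
/-- `g_ℓ` attains its maximum over `(0,1]` at some `x* ∈ [ℓ/(4k), min(ℓ/(2k),1)]`, and
when `ℓ/(4k) ≤ 1` its supremum is at most
`e^{-ℓ/2} (e/2)^ℓ (ln(e·(4k/ℓ)^{ℓ/d}))^{d/2}`. -/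
theorem stmt17 (k d ℓ : ℕ) (hk : 1 ≤ k) (hd : 1 ≤ d) (hℓ1 : 1 ≤ ℓ)
    (hℓ : ℓ ≤ min d k) :
    (∃ xstar ∈ Set.Icc ((ℓ : ℝ) / (4 * k)) (min ((ℓ : ℝ) / (2 * k)) 1),
        ∀ x ∈ Set.Ioc (0 : ℝ) 1, gl k d ℓ x ≤ gl k d ℓ xstar) ∧
    ((ℓ : ℝ) / (4 * k) ≤ 1 →
      ∀ x ∈ Set.Ioc (0 : ℝ) 1,
        gl k d ℓ x ≤ Real.exp (-(ℓ : ℝ) / 2) * (Real.exp 1 / 2) ^ ℓ *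
          (Real.log (Real.exp 1 * (4 * (k : ℝ) / ℓ) ^ ((ℓ : ℝ) / (d : ℝ)))) ^ ((d : ℝ) / 2)) := by
  have hk0 : (0:ℝ) < k := by exact_mod_cast hk
  have hd0 : (0:ℝ) < d := by exact_mod_cast hd
  have hℓ0 : (0:ℝ) < ℓ := by exact_mod_cast hℓ1
  have hℓk : (ℓ:ℝ) ≤ k := by exact_mod_cast hℓ.trans (min_le_right d k)
  set a : ℝ := (ℓ:ℝ) / (4 * k) with ha_def
  set b : ℝ := (ℓ:ℝ) / (2 * k) with hb_def
  have ha0 : 0 < a := by positivity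
  have hab : a ≤ b := by
    apply div_le_div_of_nonneg_left hℓ0.le (by positivity) (by linarith)
  have hb1 : b ≤ 1 := by
    rw [hb_def, div_le_one (by positivity)]; linarith
  have ha1 : a ≤ 1 := hab.trans hb1
  have hIcc_sub : Set.Icc a b ⊆ Set.Ioc 0 1 := fun x hx => ⟨lt_of_lt_of_le ha0 hx.1, hx.2.trans hb1⟩
  -- maximum of philk on [a,b]
  obtain ⟨xs, hxs, hmaxs⟩ := (isCompact_Icc (a := a) (b := b)).exists_isMaxOn
    ⟨a, le_refl a, hab⟩ ((philk_cont k d ℓ hk hℓ1).mono hIcc_sub)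
  -- monotone on (0, a]
  have hmono : MonotoneOn (philk k d ℓ) (Set.Ioc 0 a) := by
    apply monotoneOn_of_deriv_nonneg (convex_Ioc 0 a)
    · exact (philk_cont k d ℓ hk hℓ1).mono (fun x hx => ⟨hx.1, hx.2.trans ha1⟩)
    · rw [interior_Ioc]
      intro x hx
      exact ((philk_hasDeriv k d ℓ hk hd hℓ1 hx.1 (hx.2.le.trans ha1)).differentiableAt).differentiableWithinAt
    · rw [interior_Ioc]
      intro x hx
      have hx0 : 0 < x := hx.1
      have hxa : x ≤ a := hx.2.le
      have hx1 : x ≤ 1 := hxa.trans ha1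
      rw [(philk_hasDeriv k d ℓ hk hd hℓ1 hx0 hx1).deriv]
      have hL : (1:ℝ) ≤ 1 - ((ℓ : ℝ) / d) * Real.log x := L_ge_one d ℓ hx0 hx1
      apply div_nonneg _ (by nlinarith)
      have h4kx : 4 * (k:ℝ) * x ≤ ℓ := by
        rw [ha_def] at hxa
        rw [div_le_iff₀ (by positivity)] at *
        · nlinarith [(le_div_iff₀ (by positivity : (0:ℝ) < 4*(k:ℝ))).mp hxa]
      have h1 : (ℓ:ℝ)/2 ≤ (ℓ:ℝ) - 2*k*x := by linarith
      nlinarith [mul_le_mul_of_nonneg_left hL (by linarith : (0:ℝ) ≤ (ℓ:ℝ) - 2*k*x)]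
  -- antitone on [b, 1]
  have hanti : AntitoneOn (philk k d ℓ) (Set.Icc b 1) := by
    apply antitoneOn_of_deriv_nonpos (convex_Icc b 1)
    · exact (philk_cont k d ℓ hk hℓ1).mono (fun x hx => ⟨lt_of_lt_of_le (lt_of_lt_of_le ha0 hab) hx.1, hx.2⟩)
    · rw [interior_Icc]
      intro x hx
      exact ((philk_hasDeriv k d ℓ hk hd hℓ1 ((lt_of_lt_of_le ha0 hab).trans hx.1) hx.2.le).differentiableAt).differentiableWithinAt
    · rw [interior_Icc]
      intro x hx
      have hx0 : 0 < x := (lt_of_lt_of_le ha0 hab).trans hx.1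
      have hx1 : x ≤ 1 := hx.2.le
      rw [(philk_hasDeriv k d ℓ hk hd hℓ1 hx0 hx1).deriv]
      have hL : (1:ℝ) ≤ 1 - ((ℓ : ℝ) / d) * Real.log x := L_ge_one d ℓ hx0 hx1
      apply div_nonpos_of_nonpos_of_nonneg _ (by nlinarith)
      have h2kx : (ℓ:ℝ) ≤ 2 * k * x := by
        have := hx.1
        rw [hb_def, div_lt_iff₀ (by positivity)] at this
        linarith
      have hnp : ((ℓ:ℝ) - 2*k*x) * (1 - ((ℓ : ℝ) / d) * Real.log x) ≤ 0 :=
        mul_nonpos_of_nonpos_of_nonneg (by linarith) (by linarith)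
      linarith
  have hmin : min b 1 = b := min_eq_left hb1
  have hxs01 : xs ∈ Set.Ioc (0:ℝ) 1 := hIcc_sub hxs
  have key : ∀ x ∈ Set.Ioc (0:ℝ) 1, philk k d ℓ x ≤ philk k d ℓ xs := by
    intro x hx
    rcases le_or_gt x a with h1 | h1
    · exact (hmono ⟨hx.1, h1⟩ ⟨ha0, le_refl a⟩ h1).trans (hmaxs ⟨le_refl a, hab⟩)
    rcases le_or_gt x b with h2 | h2
    · exact hmaxs ⟨h1.le, h2⟩
    · exact (hanti ⟨le_refl b, hb1⟩ ⟨h2.le, hx.2⟩ h2.le).trans (hmaxs ⟨hab, le_refl b⟩)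
  have keyg : ∀ x ∈ Set.Ioc (0:ℝ) 1, gl k d ℓ x ≤ gl k d ℓ xs := by
    intro x hx
    rw [gl_eq k d ℓ hk hℓ1 hx.1 hx.2, gl_eq k d ℓ hk hℓ1 hxs01.1 hxs01.2]
    exact Real.exp_le_exp.2 (key x hx)
  refine ⟨⟨xs, ⟨hxs.1, by rw [hmin]; exact hxs.2⟩, keyg⟩, ?_⟩
  intro _ x hx
  refine (keyg x hx).trans ?_
  have hxs0 : 0 < xs := hxs01.1
  have hxs1 : xs ≤ 1 := hxs01.2
  have hLxs : (1:ℝ) ≤ 1 - ((ℓ : ℝ) / d) * Real.log xs := L_ge_one d ℓ hxs0 hxs1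
  have h4k : (0:ℝ) < 4 * (k:ℝ) / ℓ := by positivity
  have hRlog : Real.log (Real.exp 1 * (4 * (k : ℝ) / ℓ) ^ ((ℓ : ℝ) / (d : ℝ)))
      = 1 + ((ℓ:ℝ)/d) * Real.log (4 * (k:ℝ) / ℓ) := by
    rw [Real.log_mul (Real.exp_ne_zero 1) (by positivity), Real.log_exp, Real.log_rpow h4k]
  have hloga : Real.log a = - Real.log (4 * (k:ℝ) / ℓ) := by
    rw [← Real.log_inv]
    congr 1
    rw [ha_def, inv_div]
  have hlogle : Real.log a ≤ Real.log xs := Real.log_le_log ha0 hxs.1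
  have hLle : 1 - ((ℓ : ℝ) / d) * Real.log xs
      ≤ Real.log (Real.exp 1 * (4 * (k : ℝ) / ℓ) ^ ((ℓ : ℝ) / (d : ℝ))) := by
    rw [hRlog, hloga] at *
    have hq : (0:ℝ) ≤ (ℓ:ℝ)/d := by positivity
    nlinarith [mul_le_mul_of_nonneg_left hlogle hq]
  have h4kxs : (ℓ:ℝ) ≤ 4 * k * xs := by
    have := hxs.1
    rw [ha_def, div_le_iff₀ (by positivity)] at this
    linarith
  have h2kxs : 2 * (k:ℝ) * xs ≤ ℓ := by
    have := hxs.2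
    rw [hb_def, le_div_iff₀ (by positivity)] at this
    linarith
  rw [gl, log_term_eq d ℓ hxs0]
  have F1 : Real.exp (-2 * k * xs) ≤ Real.exp (-(ℓ:ℝ)/2) :=
    Real.exp_le_exp.2 (by linarith)
  have F2 : (Real.exp 1 * k * xs / ℓ) ^ ℓ ≤ (Real.exp 1 / 2) ^ ℓ := by
    apply pow_le_pow_left₀ (by positivity)
    rw [div_le_div_iff₀ (by positivity) two_pos]
    calc Real.exp 1 * k * xs * 2 = Real.exp 1 * (2 * k * xs) := by ring
      _ ≤ Real.exp 1 * ℓ := mul_le_mul_of_nonneg_left h2kxs (Real.exp_pos 1).le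
  have F3 : (1 - ((ℓ : ℝ) / d) * Real.log xs) ^ ((d:ℝ)/2)
      ≤ (Real.log (Real.exp 1 * (4 * (k : ℝ) / ℓ) ^ ((ℓ : ℝ) / (d : ℝ)))) ^ ((d:ℝ)/2) :=
    Real.rpow_le_rpow (by linarith) hLle (by positivity)
  have hnn1 : (0:ℝ) ≤ (Real.exp 1 * k * xs / ℓ) ^ ℓ := by positivity
  have hnn3 : (0:ℝ) ≤ (1 - ((ℓ : ℝ) / d) * Real.log xs) ^ ((d:ℝ)/2) :=
    Real.rpow_nonneg (by linarith) _
  calc Real.exp (-2 * k * xs) * (Real.exp 1 * k * xs / ℓ) ^ ℓ *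
        (1 - ((ℓ : ℝ) / d) * Real.log xs) ^ ((d:ℝ)/2)
      ≤ Real.exp (-(ℓ:ℝ)/2) * (Real.exp 1 / 2) ^ ℓ *
        (1 - ((ℓ : ℝ) / d) * Real.log xs) ^ ((d:ℝ)/2) := by
        apply mul_le_mul_of_nonneg_right _ hnn3
        exact mul_le_mul F1 F2 hnn1 (Real.exp_pos _).le
    _ ≤ _ := by
        apply mul_le_mul_of_nonneg_left F3
        positivity
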